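/- Let F be a field of characteristic ≠ 2,3 and let A be the 2-dimensional algebra with basis e_1, e_2 and structure constants given by matrix A_5(α₁): e_1e_1 = α₁e_1 + e_2, e_1e_2 = (2α₁−1)e_2, e_2e_1 = (1−α₁)e_2, e_2e_2 = 0. If 3α₁ − 1 ≠ 0, then the opposite algebra A^{op} is isomorphic to the algebra A_5(α₁/(3α₁−1)). -/

import Mathlib

/-- The algebra `A₅(α)`: `e₁e₁ = αe₁ + e₂`, `e₁e₂ = (2α-1)e₂`,
`e₂e₁ = (1-α)e₂`, `e₂e₂ = 0`, on `F × F` with `e₁ = (1,0)`, `e₂ = (0,1)`. -/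
def mulA5 {F : Type*} [Field F] (a : F) (u v : F × F) : F × F :=
  (a * (u.1 * v.1),
   u.1 * v.1 + (2 * a - 1) * (u.1 * v.2) + (1 - a) * (u.2 * v.1))

/-- If `char F ≠ 2,3` and `3α - 1 ≠ 0` then `(A₅(α))ᵒᵖ ≅ A₅(α/(3α-1))`. -/
theorem A5_op_iso
    {F : Type*} [Field F] (h2 : (2 : F) ≠ 0) (h3 : (3 : F) ≠ 0)
    (a : F) (ha : 3 * a - 1 ≠ 0) :
    ∃ g : (F × F) ≃ₗ[F] (F × F),
      ∀ u v : F × F, g (mulA5 a v u) = mulA5 (a / (3 * a - 1)) (g u) (g v) := by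
  set c : F := 3 * a - 1 with hc
  refine ⟨{ toFun := fun p => (c * p.1, c ^ 2 * p.2)
            invFun := fun p => (c⁻¹ * p.1, (c ^ 2)⁻¹ * p.2)
            map_add' := by intro p q; simp [Prod.ext_iff]; constructor <;> ring
            map_smul' := by intro r p; simp [Prod.ext_iff, smul_eq_mul]; constructor <;> ring
            left_inv := by
              intro p
              have hc2 : c ^ 2 ≠ 0 := pow_ne_zero _ ha
              simp [Prod.ext_iff]
              constructor
              · field_simp
              · field_simp
            right_inv := by
              intro p
              have hc2 : c ^ 2 ≠ 0 := pow_ne_zero _ ha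
              simp [Prod.ext_iff]
              constructor
              · field_simp
              · field_simp }, ?_⟩
  intro u v
  simp only [mulA5, LinearEquiv.coe_mk, LinearMap.coe_mk, AddHom.coe_mk, Prod.ext_iff]
  constructor
  · field_simp
  · field_simp
    ring
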